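/- The map b ↦ (φ_0(b), φ_1(b), …, φ_n(b)) restricts to a bijection from the set of minimal elements {b ∈ B^(l) : x_i = x̄_i for all 2 ≤ i ≤ n−1} onto the set {(a_0,…,a_n) ∈ ℕ^{n+1} : a_0 + a_1 + 2(a_2 + ⋯ + a_{n−2}) + a_{n−1} + a_n = l} of level-l dominant classical weights of D_n^(1). -/

import Mathlib

/-- An element candidate of the level-`l` perfect crystal of type `D_n^(1)`:
a pair of integer sequences `(x, x̄)`, whose relevant entries are indexed by `1, …, n`. -/
abbrev DElt : Type := (ℕ → ℤ) × (ℕ → ℤ)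

/-- All entries (indices `1, …, n`) are nonnegative; for the result of a Kashiwara
operator this expresses that the result "is not `0`". -/
def dvalid (n : ℕ) (p : DElt) : Prop :=
  ∀ i, 1 ≤ i → i ≤ n → 0 ≤ p.1 i ∧ 0 ≤ p.2 i

/-- Membership in the level-`l` perfect crystal `B^(l)` of type `D_n^(1)`:
all entries are nonnegative integers (we normalize the irrelevant indices to `0`),
`x_n = 0` or `x̄_n = 0`, and `Σ_{i=1}^n (x_i + x̄_i) = l`. -/
def dmem (n l : ℕ) (p : DElt) : Prop :=
  dvalid n p ∧
  (∀ i, i = 0 ∨ n < i → p.1 i = 0 ∧ p.2 i = 0) ∧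
  (p.1 n = 0 ∨ p.2 n = 0) ∧
  (∑ i ∈ Finset.Icc 1 n, (p.1 i + p.2 i)) = (l : ℤ)

/-- `(x)_+ = max(0, x)`. -/
def pPart (x : ℤ) : ℤ := max 0 x

/-- `φ_i(b)` for `b = (x | x̄)`:  `φ_0 = x̄_1 + (x̄_2 - x_2)_+`;
`φ_i = x_i + (x̄_{i+1} - x_{i+1})_+` for `1 ≤ i ≤ n-2`;
`φ_{n-1} = x_{n-1} + x̄_n`;  `φ_n = x_{n-1} + x_n`. -/
def dphi (n i : ℕ) (p : DElt) : ℤ :=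
  if i = 0 then p.2 1 + pPart (p.2 2 - p.1 2)
  else if i ≤ n - 2 then p.1 i + pPart (p.2 (i+1) - p.1 (i+1))
  else if i = n - 1 then p.1 (n-1) + p.2 n
  else p.1 (n-1) + p.1 n

/-- `ε_i(b)` for `b = (x | x̄)`:  `ε_0 = x_1 + (x_2 - x̄_2)_+`;
`ε_i = x̄_i + (x_{i+1} - x̄_{i+1})_+` for `1 ≤ i ≤ n-2`;
`ε_{n-1} = x̄_{n-1} + x_n`;  `ε_n = x̄_{n-1} + x̄_n`. -/
def deps (n i : ℕ) (p : DElt) : ℤ :=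
  if i = 0 then p.1 1 + pPart (p.1 2 - p.2 2)
  else if i ≤ n - 2 then p.2 i + pPart (p.1 (i+1) - p.2 (i+1))
  else if i = n - 1 then p.2 (n-1) + p.1 n
  else p.2 (n-1) + p.2 n

/-- The Kashiwara operator `f̃_i` of Theorem 2.2, as a total map on pairs of sequences;
"being `0`" is recorded by failure of `dvalid` for the result. -/
def ftilde (n i : ℕ) (p : DElt) : DElt :=
  if i = 0 then
    -- case `x_2 ≥ x̄_2` / case `x_2 < x̄_2`
    if p.2 2 ≤ p.1 2 then
      (Function.update p.1 2 (p.1 2 + 1), Function.update p.2 1 (p.2 1 - 1))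
    else
      (Function.update p.1 1 (p.1 1 + 1), Function.update p.2 2 (p.2 2 - 1))
  else if i ≤ n - 2 then
    -- case `x_{i+1} ≥ x̄_{i+1}` / case `x_{i+1} < x̄_{i+1}`
    if p.2 (i+1) ≤ p.1 (i+1) then
      (Function.update (Function.update p.1 i (p.1 i - 1)) (i+1) (p.1 (i+1) + 1), p.2)
    else
      (p.1, Function.update (Function.update p.2 (i+1) (p.2 (i+1) - 1)) i (p.2 i + 1))
  else if i = n - 1 then
    -- case `x̄_n = 0` / case `x_n = 0, x̄_n ≥ 1`
    if p.2 n = 0 then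
      (Function.update (Function.update p.1 (n-1) (p.1 (n-1) - 1)) n (p.1 n + 1), p.2)
    else
      (p.1, Function.update (Function.update p.2 n (p.2 n - 1)) (n-1) (p.2 (n-1) + 1))
  else
    -- `i = n`: case `x_n ≥ 1, x̄_n = 0` / case `x_n = 0`
    if 1 ≤ p.1 n ∧ p.2 n = 0 then
      (Function.update p.1 n (p.1 n - 1), Function.update p.2 (n-1) (p.2 (n-1) + 1))
    else
      (Function.update p.1 (n-1) (p.1 (n-1) - 1), Function.update p.2 n (p.2 n + 1))

/-- The Kashiwara operator `ẽ_i` of Theorem 2.2, as a total map on pairs of sequences;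
"being `0`" is recorded by failure of `dvalid` for the result. -/
def etilde (n i : ℕ) (p : DElt) : DElt :=
  if i = 0 then
    -- case `x_2 > x̄_2` / case `x_2 ≤ x̄_2`
    if p.2 2 < p.1 2 then
      (Function.update p.1 2 (p.1 2 - 1), Function.update p.2 1 (p.2 1 + 1))
    else
      (Function.update p.1 1 (p.1 1 - 1), Function.update p.2 2 (p.2 2 + 1))
  else if i ≤ n - 2 then
    -- case `x_{i+1} > x̄_{i+1}` / case `x_{i+1} ≤ x̄_{i+1}`
    if p.2 (i+1) < p.1 (i+1) then
      (Function.update (Function.update p.1 i (p.1 i + 1)) (i+1) (p.1 (i+1) - 1), p.2)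
    else
      (p.1, Function.update (Function.update p.2 (i+1) (p.2 (i+1) + 1)) i (p.2 i - 1))
  else if i = n - 1 then
    -- case `x_n ≥ 1, x̄_n = 0` / case `x_n = 0`
    if 1 ≤ p.1 n ∧ p.2 n = 0 then
      (Function.update (Function.update p.1 (n-1) (p.1 (n-1) + 1)) n (p.1 n - 1), p.2)
    else
      (p.1, Function.update (Function.update p.2 n (p.2 n + 1)) (n-1) (p.2 (n-1) - 1))
  else
    -- `i = n`: case `x̄_n = 0` / case `x_n = 0, x̄_n ≥ 1`
    if p.2 n = 0 then
      (Function.update p.1 n (p.1 n + 1), Function.update p.2 (n-1) (p.2 (n-1) - 1))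
    else
      (Function.update p.1 (n-1) (p.1 (n-1) + 1), Function.update p.2 n (p.2 n - 1))

section Aux

lemma pPart_nonneg (x : ℤ) : 0 ≤ pPart x := le_max_left 0 x

lemma sum_split (n : ℕ) (hn : 4 ≤ n) (F : ℕ → ℤ) :
    ∑ i ∈ Finset.Icc 1 n, F i
      = F 1 + (∑ i ∈ Finset.Icc 2 (n-2), F i) + F (n-1) + F n := by
  obtain ⟨m, rfl⟩ : ∃ m, n = m + 4 := ⟨n - 4, by omega⟩
  have e1 : m + 4 - 1 = m + 3 := by omega
  have e2 : m + 4 - 2 = m + 2 := by omega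
  rw [e1, e2]
  have h4 : m + 4 = (m + 3) + 1 := by omega
  rw [h4, Finset.sum_Icc_succ_top (by omega : 1 ≤ m + 3 + 1)]
  have h3 : m + 3 = (m + 2) + 1 := by omega
  rw [h3, Finset.sum_Icc_succ_top (by omega : 1 ≤ m + 2 + 1)]
  have h1 : Finset.Icc 1 (m+2) = insert 1 (Finset.Icc 2 (m+2)) := by
    ext x; simp [Finset.mem_Icc]; omega
  rw [h1, Finset.sum_insert (by simp)]


lemma dphi0_min (n : ℕ) (p : DElt) (h : p.1 2 = p.2 2) : dphi n 0 p = p.2 1 := by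
  simp [dphi, pPart, h]

lemma dphi_mid (n : ℕ) (hn : 4 ≤ n) (p : DElt) (i : ℕ) (h1 : 1 ≤ i) (h2 : i ≤ n-2)
    (h : p.1 (i+1) = p.2 (i+1)) : dphi n i p = p.1 i := by
  rw [dphi, if_neg (by omega), if_pos h2, h]
  simp [pPart]

lemma dphi_top1 (n : ℕ) (hn : 4 ≤ n) (p : DElt) : dphi n (n-1) p = p.1 (n-1) + p.2 n := by
  rw [dphi, if_neg (by omega), if_neg (by omega)]; simp

lemma dphi_top (n : ℕ) (hn : 4 ≤ n) (p : DElt) : dphi n n p = p.1 (n-1) + p.1 n := by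
  rw [dphi, if_neg (by omega), if_neg (by omega), if_neg (by omega)]

/-- Inverse map: from a dominant weight tuple to a minimal element. -/
def ginv (n : ℕ) (a : ℕ → ℤ) : DElt :=
  (fun i => if i = 0 ∨ n < i then 0
    else if i ≤ n-2 then a i
    else if i = n-1 then min (a (n-1)) (a n)
    else max 0 (a n - a (n-1)),
   fun i => if i = 0 ∨ n < i then 0
    else if i = 1 then a 0
    else if i ≤ n-2 then a i
    else if i = n-1 then min (a (n-1)) (a n)
    else max 0 (a (n-1) - a n))

lemma ginv_min (n : ℕ) (hn : 4 ≤ n) (a : ℕ → ℤ) (i : ℕ) (h1 : 2 ≤ i) (h2 : i ≤ n-1) :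
    (ginv n a).1 i = (ginv n a).2 i := by
  simp only [ginv]
  split_ifs <;> first | rfl | omega

end Aux

section GinvEval
variable (n : ℕ) (a : ℕ → ℤ)

lemma g1_out (i : ℕ) (h : i = 0 ∨ n < i) : (ginv n a).1 i = 0 := by
  simp only [ginv]; rw [if_pos h]

lemma g2_out (i : ℕ) (h : i = 0 ∨ n < i) : (ginv n a).2 i = 0 := by
  simp only [ginv]; rw [if_pos h]

lemma g1_mid (i : ℕ) (h1 : 1 ≤ i) (h2 : i ≤ n - 2) : (ginv n a).1 i = a i := by
  simp only [ginv]; rw [if_neg (by omega), if_pos h2]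

lemma g1_n1 (hn : 4 ≤ n) : (ginv n a).1 (n-1) = min (a (n-1)) (a n) := by
  simp only [ginv]; rw [if_neg (by omega), if_neg (by omega)]; simp

lemma g1_n (hn : 4 ≤ n) : (ginv n a).1 n = max 0 (a n - a (n-1)) := by
  simp only [ginv]; rw [if_neg (by omega), if_neg (by omega), if_neg (by omega)]

lemma g2_1 (hn : 4 ≤ n) : (ginv n a).2 1 = a 0 := by
  simp only [ginv]; rw [if_neg (by omega)]; simp

lemma g2_mid (i : ℕ) (h1 : 2 ≤ i) (h2 : i ≤ n - 2) : (ginv n a).2 i = a i := by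
  simp only [ginv]; rw [if_neg (by omega), if_neg (by omega), if_pos h2]

lemma g2_n1 (hn : 4 ≤ n) : (ginv n a).2 (n-1) = min (a (n-1)) (a n) := by
  simp only [ginv]; rw [if_neg (by omega), if_neg (by omega), if_neg (by omega)]; simp

lemma g2_n (hn : 4 ≤ n) : (ginv n a).2 n = max 0 (a (n-1) - a n) := by
  simp only [ginv]
  rw [if_neg (by omega), if_neg (by omega), if_neg (by omega), if_neg (by omega)]

end GinvEval
/-- `b ↦ (φ_0(b), …, φ_n(b))` is a bijection from the set of minimal
elements `{b ∈ B^(l) : x_i = x̄_i for 2 ≤ i ≤ n-1}` onto the set of level-`l` dominant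
classical weights `{(a_0,…,a_n) ∈ ℕ^{n+1} : a_0 + a_1 + 2(a_2 + ⋯ + a_{n-2}) + a_{n-1} + a_n = l}`
(tuples are encoded as integer sequences vanishing beyond index `n`). -/
theorem stmt15 (n l : ℕ) (hn : 4 ≤ n) (hl : 1 ≤ l) :
    Set.BijOn (fun p : DElt => fun i : ℕ => if i ≤ n then dphi n i p else 0)
      {p : DElt | dmem n l p ∧ ∀ i, 2 ≤ i → i ≤ n - 1 → p.1 i = p.2 i}
      {a : ℕ → ℤ | (∀ i, i ≤ n → 0 ≤ a i) ∧ (∀ i, n < i → a i = 0) ∧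
        a 0 + a 1 + 2 * (∑ i ∈ Finset.Icc 2 (n-2), a i) + a (n-1) + a n = (l : ℤ)} := by
  apply Set.InvOn.bijOn (f' := ginv n)
  · constructor
    · -- left inverse
      intro p hp
      obtain ⟨⟨hv, hz, hor, hsum⟩, hmin⟩ := hp
      have hAmid : ∀ j, 1 ≤ j → j ≤ n - 2 → (if j ≤ n then dphi n j p else 0) = p.1 j := by
        intro j h1 h2
        rw [if_pos (by omega), dphi_mid n hn p j h1 h2 (hmin (j+1) (by omega) (by omega))]
      have hA0 : (if (0:ℕ) ≤ n then dphi n 0 p else 0) = p.2 1 := by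
        rw [if_pos (by omega), dphi0_min n p (hmin 2 (by omega) (by omega))]
      have hAn1 : (if n - 1 ≤ n then dphi n (n-1) p else 0) = p.1 (n-1) + p.2 n := by
        rw [if_pos (by omega), dphi_top1 n hn p]
      have hAn : (if n ≤ n then dphi n n p else 0) = p.1 (n-1) + p.1 n := by
        rw [if_pos le_rfl, dphi_top n hn p]
      have hvn := hv n (by omega) le_rfl
      have hvn1 := hv (n-1) (by omega) (by omega)
      show ginv n (fun i : ℕ => if i ≤ n then dphi n i p else 0) = p
      set A : ℕ → ℤ := fun i : ℕ => if i ≤ n then dphi n i p else 0 with hA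
      refine Prod.ext ?_ ?_ <;> funext i
      · by_cases h1 : i = 0 ∨ n < i
        · rw [g1_out n A i h1]; exact ((hz i h1).1).symm
        by_cases h2 : i ≤ n - 2
        · rw [g1_mid n A i (by omega) h2]; exact hAmid i (by omega) h2
        by_cases h3 : i = n - 1
        · rw [h3, g1_n1 n A hn]
          have e1 : A (n-1) = p.1 (n-1) + p.2 n := hAn1
          have e2 : A n = p.1 (n-1) + p.1 n := hAn
          rw [e1, e2]; omega
        · have hi : i = n := by omega
          rw [hi, g1_n n A hn]
          have e1 : A (n-1) = p.1 (n-1) + p.2 n := hAn1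
          have e2 : A n = p.1 (n-1) + p.1 n := hAn
          rw [e1, e2]; omega
      · by_cases h1 : i = 0 ∨ n < i
        · rw [g2_out n A i h1]; exact ((hz i h1).2).symm
        by_cases h2 : i = 1
        · rw [h2, g2_1 n A hn]; exact hA0
        by_cases h3 : i ≤ n - 2
        · rw [g2_mid n A i (by omega) h3, ← hmin i (by omega) (by omega)]
          exact hAmid i (by omega) h3
        by_cases h4 : i = n - 1
        · rw [h4, g2_n1 n A hn]
          have e1 : A (n-1) = p.1 (n-1) + p.2 n := hAn1
          have e2 : A n = p.1 (n-1) + p.1 n := hAn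
          rw [e1, e2, ← hmin (n-1) (by omega) (by omega)]; omega
        · have hi : i = n := by omega
          rw [hi, g2_n n A hn]
          have e1 : A (n-1) = p.1 (n-1) + p.2 n := hAn1
          have e2 : A n = p.1 (n-1) + p.1 n := hAn
          rw [e1, e2]; omega
    · -- right inverse
      intro a ha
      obtain ⟨ha1, ha2, ha3⟩ := ha
      funext i
      show (if i ≤ n then dphi n i (ginv n a) else 0) = a i
      by_cases hin : i ≤ n
      swap
      · rw [if_neg hin, (ha2 i (by omega)).symm]
      rw [if_pos hin]
      rcases Nat.eq_zero_or_pos i with h0 | h1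
      · rw [h0, dphi0_min n (ginv n a) (ginv_min n hn a 2 (by omega) (by omega)),
          g2_1 n a hn]
      by_cases h2 : i ≤ n - 2
      · rw [dphi_mid n hn (ginv n a) i h1 h2 (ginv_min n hn a (i+1) (by omega) (by omega)),
          g1_mid n a i h1 h2]
      by_cases h3 : i = n - 1
      · rw [h3, dphi_top1 n hn (ginv n a), g1_n1 n a hn, g2_n n a hn]; omega
      · have hi : i = n := by omega
        rw [hi, dphi_top n hn (ginv n a), g1_n1 n a hn, g1_n n a hn]; omega
  · -- MapsTo f S T
    intro p hp
    simp only [Set.mem_setOf_eq] at hp ⊢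
    obtain ⟨⟨hv, hz, hor, hsum⟩, hmin⟩ := hp
    refine ⟨?_, ?_, ?_⟩
    · intro i hi
      rw [if_pos hi, dphi]
      split_ifs with e1 e2 e3
      · exact add_nonneg (hv 1 le_rfl (by omega)).2 (pPart_nonneg _)
      · exact add_nonneg (hv i (by omega) (by omega)).1 (pPart_nonneg _)
      · exact add_nonneg (hv (n-1) (by omega) (by omega)).1 (hv n (by omega) le_rfl).2
      · exact add_nonneg (hv (n-1) (by omega) (by omega)).1 (hv n (by omega) le_rfl).1
    · intro i hi
      rw [if_neg (by omega)]
    · rw [sum_split n hn (fun i => p.1 i + p.2 i)] at hsum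
      have hss : ∑ i ∈ Finset.Icc 2 (n-2), (p.1 i + p.2 i)
          = 2 * ∑ i ∈ Finset.Icc 2 (n-2), p.1 i := by
        rw [Finset.mul_sum]
        refine Finset.sum_congr rfl (fun i hi => ?_)
        rw [Finset.mem_Icc] at hi
        rw [← hmin i hi.1 (by omega), two_mul]
      rw [hss] at hsum
      have hS : ∑ i ∈ Finset.Icc 2 (n-2), (if i ≤ n then dphi n i p else 0)
          = ∑ i ∈ Finset.Icc 2 (n-2), p.1 i := by
        refine Finset.sum_congr rfl (fun i hi => ?_)
        rw [Finset.mem_Icc] at hi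
        rw [if_pos (by omega), dphi_mid n hn p i (by omega) hi.2
          (hmin (i+1) (by omega) (by omega))]
      rw [hS, if_pos (by omega : (0:ℕ) ≤ n), if_pos (by omega : (1:ℕ) ≤ n),
        if_pos (by omega : n - 1 ≤ n), if_pos le_rfl,
        dphi0_min n p (hmin 2 (by omega) (by omega)),
        dphi_mid n hn p 1 le_rfl (by omega) (hmin 2 (by omega) (by omega)),
        dphi_top1 n hn p, dphi_top n hn p]
      have hm := hmin (n-1) (by omega) (by omega)
      linarith [hsum, hm]
  · -- MapsTo ginv T S
    intro a ha
    simp only [Set.mem_setOf_eq] at ha ⊢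
    obtain ⟨ha1, ha2, ha3⟩ := ha
    have h2 := ha1 (n-1) (by omega)
    have h3 := ha1 n le_rfl
    refine ⟨⟨?_, ?_, ?_, ?_⟩, fun i hi1 hi2 => ginv_min n hn a i hi1 hi2⟩
    · intro i hi1 hi2
      have h1 := ha1 i hi2
      by_cases hc : i ≤ n - 2
      · rcases Nat.eq_or_lt_of_le hi1 with h | h
        · rw [← h] at hc ⊢
          rw [g1_mid n a 1 le_rfl hc, g2_1 n a hn]
          exact ⟨ha1 1 (by omega), ha1 0 (by omega)⟩
        · rw [g1_mid n a i (by omega) hc, g2_mid n a i (by omega) hc]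
          exact ⟨h1, h1⟩
      by_cases hc1 : i = n - 1
      · rw [hc1, g1_n1 n a hn, g2_n1 n a hn]
        constructor <;> omega
      · have hi : i = n := by omega
        rw [hi, g1_n n a hn, g2_n n a hn]
        constructor <;> omega
    · intro i hi
      exact ⟨g1_out n a i hi, g2_out n a i hi⟩
    · rw [g1_n n a hn, g2_n n a hn]; omega
    · rw [sum_split n hn]
      have hS : ∑ i ∈ Finset.Icc 2 (n-2), ((ginv n a).1 i + (ginv n a).2 i)
          = 2 * ∑ i ∈ Finset.Icc 2 (n-2), a i := by
        rw [Finset.mul_sum]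
        refine Finset.sum_congr rfl (fun i hi => ?_)
        rw [Finset.mem_Icc] at hi
        rw [g1_mid n a i (by omega) hi.2, g2_mid n a i hi.1 hi.2, two_mul]
      rw [hS, g1_mid n a 1 le_rfl (by omega), g2_1 n a hn, g1_n1 n a hn, g2_n1 n a hn,
        g1_n n a hn, g2_n n a hn]
      have key : 2 * min (a (n-1)) (a n) + max 0 (a n - a (n-1))
          + max 0 (a (n-1) - a n) = a (n-1) + a n := by omega
      linarith [ha3, key]
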